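/- Let s ≥ 0 be an integer and let R be a finite tree with no induced subgraph isomorphic to sP₁ + P₃ such that |V(R)| > max{7, 4s−2}. Then R has exactly one vertex r of degree greater than 2, every vertex of degree 2 in R is adjacent to r, there are at most s−1 vertices of degree 2, and r has at least 3s−1 neighbours. -/

import Mathlib

open SimpleGraph

/-- The graph `sP₁ + P₃`: the disjoint union of `s` isolated vertices and a path on
3 vertices. -/
def sP1P3 (s : ℕ) : SimpleGraph (Fin s ⊕ Fin 3) :=
  SimpleGraph.fromRel (fun a b =>
    ∃ i j : Fin 3, a = Sum.inr i ∧ b = Sum.inr j ∧ (i : ℕ) + 1 = (j : ℕ))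

/-- `G` is `H`-free: no induced subgraph of `G` is isomorphic to `H`. -/
def HFree {W V : Type*} (H : SimpleGraph W) (G : SimpleGraph V) : Prop :=
  IsEmpty (H ↪g G)

namespace Stmt6

open Finset

variable {V : Type*}

lemma bool_trans {a b β : Bool} (h1 : a ≠ b) (h2 : a ≠ β) : b = β := by
  revert h1 h2; cases a <;> cases b <;> cases β <;> simp

lemma bool_eq_of_ne {a b c : Bool} (h1 : a ≠ c) (h2 : b ≠ c) : a = b := by
  revert h1 h2; cases a <;> cases b <;> cases c <;> simp

lemma bool_opp {a b : Bool} (h : a ≠ b) : b = !a := by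
  revert h; cases a <;> cases b <;> simp

lemma closed_reach {R : SimpleGraph V} {S : Set V}
    (hS : ∀ u ∈ S, ∀ w, R.Adj u w → w ∈ S) {v u : V} (p : R.Walk v u) :
    v ∈ S → u ∈ S := by
  induction p with
  | nil => exact id
  | cons h' q ih => exact fun hv => ih (hS _ hv _ h')

lemma no_c4 {R : SimpleGraph V} (hA : R.IsAcyclic) {w₁ w₂ x z : V}
    (hw : w₁ ≠ w₂) (hxz : x ≠ z) (h1 : R.Adj w₁ x) (h2 : R.Adj x w₂)
    (h3 : R.Adj w₁ z) (h4 : R.Adj z w₂) : False := by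
  have hp := isAcyclic_iff_path_unique.mp hA
  let p1 : R.Path w₁ w₂ := ⟨.cons h1 (.cons h2 .nil), by
    simp [Walk.isPath_def, h1.ne, h2.ne, hw]⟩
  let p2 : R.Path w₁ w₂ := ⟨.cons h3 (.cons h4 .nil), by
    simp [Walk.isPath_def, h3.ne, h4.ne, hw]⟩
  have heq : p1 = p2 := hp p1 p2
  have : (p1 : R.Walk w₁ w₂).support = (p2 : R.Walk w₁ w₂).support := by rw [heq]
  simp only [p1, p2, Walk.support_cons, Walk.support_nil] at this
  injection this with h1 h2
  injection h2 with h3 h4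
  exact hxz h3

lemma tree_coloring {R : SimpleGraph V} (htree : R.IsTree) :
    ∃ c : V → Bool, ∀ {u v}, R.Adj u v → c u ≠ c v := by
  obtain ⟨r₀⟩ := htree.isConnected.nonempty
  choose p hp hup using htree.existsUnique_path
  refine ⟨fun v => decide ((p v r₀).length % 2 = 0), fun {u v} huv => ?_⟩
  suffices h : (p u r₀).length + 1 = (p v r₀).length ∨
      (p v r₀).length + 1 = (p u r₀).length by
    refine fun hcon => ?_
    rw [decide_eq_decide] at hcon
    omega
  haveI := Classical.decEq V
  by_cases hmem : u ∈ (p v r₀).support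
  · left
    have h1 := Walk.take_spec (p v r₀) hmem
    have ht : ((p v r₀).takeUntil u hmem).IsPath := (hp v r₀).takeUntil hmem
    have hd : ((p v r₀).dropUntil u hmem).IsPath := (hp v r₀).dropUntil hmem
    have e1 : (p v r₀).takeUntil u hmem = Walk.cons huv.symm .nil :=
      (hup v u _ ht).trans (hup v u _ (by simp [Walk.isPath_def, huv.ne'])).symm
    have e2 : (p v r₀).dropUntil u hmem = p u r₀ := hup u r₀ _ hd
    have := congrArg Walk.length h1
    rw [Walk.length_append, e1, e2] at this
    simp at this
    omega
  · right
    have hcons : (Walk.cons huv (p v r₀)).IsPath :=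
      ((Walk.cons_isPath_iff _ _).mpr ⟨hp v r₀, hmem⟩)
    have := hup u r₀ _ hcons
    have := congrArg Walk.length this
    simp at this
    omega

lemma class_handshake [Fintype V] {R : SimpleGraph V} [DecidableRel R.Adj]
    {c : V → Bool} (hc : ∀ {u v}, R.Adj u v → c u ≠ c v) (β : Bool) :
    ∑ v ∈ univ.filter (fun v => c v = β), R.degree v = R.edgeFinset.card := by
  classical
  have step1 : ∑ v ∈ univ.filter (fun v => c v = β), R.degree v
      = (univ.filter (fun d : R.Dart => c d.fst = β)).card := by
    rw [Finset.card_eq_sum_card_fiberwise (f := fun d : R.Dart => d.fst)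
      (t := univ.filter (fun v => c v = β))
      (fun d hd => by simpa using (mem_filter.mp hd).2)]
    refine Finset.sum_congr rfl fun v hv => ?_
    rw [← R.dart_fst_fiber_card_eq_degree v]
    congr 1
    ext d
    have hv' : c v = β := by simpa using (mem_filter.mp hv).2
    simp only [mem_filter, mem_univ, true_and]
    constructor <;> intro h
    · first
      | exact h.2
      | exact ⟨by rw [h]; exact hv', h⟩
    · first
      | exact h.2
      | exact ⟨by rw [h]; exact hv', h⟩
  rw [step1]
  refine Finset.card_bij (fun d _ => d.edge) ?_ ?_ ?_
  · intro d _; exact mem_edgeFinset.mpr d.edge_mem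
  · intro d₁ h₁ d₂ h₂ he
    rcases (dart_edge_eq_iff d₁ d₂).mp he with h | h
    · exact h
    · exfalso
      simp only [mem_filter, mem_univ, true_and] at h₁ h₂
      rw [h] at h₁
      have : d₂.symm.fst = d₂.snd := rfl
      rw [this] at h₁
      exact hc d₂.adj (h₂.trans h₁.symm)
  · intro e he
    rw [mem_edgeFinset] at he
    induction e with
    | _ u v =>
      have h : R.Adj u v := he
      by_cases hu : c u = β
      · exact ⟨(⟨(u, v), h⟩ : R.Dart), by simpa using hu, by simp [Dart.edge]⟩
      · exact ⟨(⟨(v, u), h.symm⟩ : R.Dart), by simpa using bool_trans (hc h) hu,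
          by simp [Dart.edge, Sym2.eq_swap]⟩

lemma indep_bound [Fintype V] {s : ℕ} {R : SimpleGraph V} (hfree : HFree (sP1P3 s) R)
    {x y z : V} (hxy : R.Adj x y) (hyz : R.Adj y z) (hxz : ¬R.Adj x z) (hxzne : x ≠ z)
    {S : Finset V} (hind : ∀ u ∈ S, ∀ w ∈ S, u ≠ w → ¬R.Adj u w)
    (hSx : ∀ u ∈ S, ¬R.Adj u x) (hSy : ∀ u ∈ S, ¬R.Adj u y) (hSz : ∀ u ∈ S, ¬R.Adj u z)
    (hx : x ∉ S) (hy : y ∉ S) (hz : z ∉ S) : S.card < s := by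
  by_contra hcon
  push_neg at hcon
  obtain ⟨T, hTS, hTcard⟩ := Finset.exists_subset_card_eq hcon
  classical
  let e := T.equivFinOfCardEq hTcard
  let g : Fin s → V := fun i => (e.symm i : V)
  have hgmem : ∀ i, g i ∈ S := fun i => hTS (e.symm i).2
  have hginj : Function.Injective g := fun i j h => by
    have : (e.symm i : T) = (e.symm j : T) := Subtype.ext h
    simpa using e.symm.injective this
  let f : Fin s ⊕ Fin 3 → V := fun a => match a with
    | .inl i => g i
    | .inr j => ![x, y, z] j
  have hne3 : ∀ j : Fin 3, ∀ i : Fin s, g i ≠ ![x, y, z] j := by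
    intro j i
    fin_cases j <;> simp [f]
    · exact fun h => hx (h ▸ hgmem i)
    · exact fun h => hy (h ▸ hgmem i)
    · exact fun h => hz (h ▸ hgmem i)
  have hnadj : ∀ j : Fin 3, ∀ i : Fin s, ¬R.Adj (g i) (![x, y, z] j) := by
    intro j i
    fin_cases j <;> simp [f]
    · exact hSx _ (hgmem i)
    · exact hSy _ (hgmem i)
    · exact hSz _ (hgmem i)
  have hinj : Function.Injective f := by
    rintro (i | i) (j | j) h <;> simp only [f] at h
    · rw [hginj h]
    · exact absurd h (hne3 j i)
    · exact absurd h.symm (hne3 i j)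
    · congr 1
      fin_cases i <;> fin_cases j <;> first
        | rfl
        | (exfalso; revert h; simp [hxy.ne, hyz.ne, hxzne, hxy.ne', hyz.ne', hxzne.symm])
  have hrel : ∀ {a b : Fin s ⊕ Fin 3}, R.Adj (f a) (f b) ↔ (sP1P3 s).Adj a b := by
    rintro (i | i) (j | j)
    · simp only [sP1P3, fromRel_adj, f]
      constructor
      · intro h
        exact absurd h (by
          rcases eq_or_ne i j with rfl | hij
          · exact R.irrefl
          · exact hind _ (hgmem i) _ (hgmem j) (fun hh => hij (hginj hh)))
      · rintro ⟨-, ⟨_, _, h, -⟩ | ⟨_, _, h, -⟩⟩ <;> simp at h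
    · simp only [sP1P3, fromRel_adj, f]
      constructor
      · intro h; exact absurd h (hnadj j i)
      · rintro ⟨-, ⟨_, _, h, -⟩ | ⟨_, _, _, h, -⟩⟩ <;> simp at h
    · simp only [sP1P3, fromRel_adj, f]
      constructor
      · intro h; exact absurd h (fun hh => (hnadj i j) hh.symm)
      · rintro ⟨-, ⟨_, _, _, h, -⟩ | ⟨_, _, h, -⟩⟩ <;> simp at h
    · simp only [sP1P3, fromRel_adj, f]
      fin_cases i <;> fin_cases j <;>
        (simp [Fin.ext_iff, hxy, hyz, hxz, hxy.symm, hyz.symm,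
          R.irrefl, hxy.ne, hyz.ne, hxzne, fun h => hxz (R.adj_symm h)]) <;>
        try decide
      exact iff_of_false (fun h => hxz (R.adj_symm h)) (by decide)
  exact hfree.false ⟨⟨f, hinj⟩, hrel⟩

end Stmt6

theorem stmt_6 {V : Type*} [Fintype V] (s : ℕ) (R : SimpleGraph V)
    (htree : R.IsTree) (hfree : HFree (sP1P3 s) R)
    (hbig : max 7 (4 * s - 2) < Fintype.card V) :
    ∃ r : V,
      2 < (R.neighborSet r).ncard ∧
      (∀ v : V, 2 < (R.neighborSet v).ncard → v = r) ∧
      (∀ v : V, (R.neighborSet v).ncard = 2 → R.Adj v r) ∧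
      {v : V | (R.neighborSet v).ncard = 2}.ncard ≤ s - 1 ∧
      3 * s - 1 ≤ (R.neighborSet r).ncard := by
  classical
  open Finset Stmt6 in
  obtain ⟨c, hc⟩ := Stmt6.tree_coloring htree
  set n := Fintype.card V with hn
  have hn8 : 8 ≤ n := by
    have := lt_of_le_of_lt (le_max_left 7 (4 * s - 2)) hbig; omega
  have hns : 4 * s - 2 < n := lt_of_le_of_lt (le_max_right _ _) hbig
  haveI : Nonempty V := Fintype.card_pos_iff.mp (by omega)
  have hdeg : ∀ v, (R.neighborSet v).ncard = R.degree v := fun v => by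
    rw [Set.ncard_eq_toFinset_card', Set.toFinset_card]
    exact R.card_neighborSet_eq_degree v
  -- degree ≥ 1
  have hd1 : ∀ v, 1 ≤ R.degree v := by
    intro v
    obtain ⟨u, hu⟩ := Fintype.exists_ne_of_one_lt_card (by omega) v
    obtain ⟨p⟩ := htree.isConnected.preconnected v u
    rcases p with _ | ⟨hadj, p⟩
    · exact absurd rfl hu
    · exact R.degree_pos_iff_exists_adj v |>.mpr ⟨_, hadj⟩
  -- sum of degrees
  have hedges : R.edgeFinset.card + 1 = n := htree.card_edgeFinset
  have hsumdeg : ∑ v, R.degree v = 2 * R.edgeFinset.card :=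
    R.sum_degrees_eq_twice_card_edges
  -- a vertex of degree ≥ 2 exists
  have two_nbrs : ∀ {v : V}, 2 ≤ R.degree v →
      ∃ a b, R.Adj v a ∧ R.Adj v b ∧ a ≠ b := by
    intro v hv
    obtain ⟨a, ha, b, hb, hab⟩ := Finset.one_lt_card.mp
      (by rw [← SimpleGraph.degree]; omega : 1 < (R.neighborFinset v).card)
    exact ⟨a, b, (R.mem_neighborFinset v a).mp ha, (R.mem_neighborFinset v b).mp hb, hab⟩
  have nonadj_of_common : ∀ {y a b : V}, R.Adj y a → R.Adj y b → ¬R.Adj a b := by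
    intro y a b hya hyb hab
    exact (hc hab) (bool_eq_of_ne (fun h => hc hya h.symm) (fun h => hc hyb h.symm))
  have hex2 : ∃ y, 2 ≤ R.degree y := by
    by_contra h
    push_neg at h
    have hle : ∑ v, R.degree v ≤ n * 1 := by
      calc ∑ v, R.degree v ≤ (univ : Finset V).card * 1 := by
            apply Finset.sum_le_card_nsmul
            intro x _
            have := h x; omega
        _ = n * 1 := by rw [Finset.card_univ]
    omega
  obtain ⟨y0, hy0⟩ := hex2
  obtain ⟨a0, b0, hya0, hyb0, hab0⟩ := two_nbrs hy0
  -- s ≥ 1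
  have hs1 : 1 ≤ s := by
    have := Stmt6.indep_bound hfree hya0.symm hyb0 (nonadj_of_common hya0 hyb0) hab0
      (S := ∅) (by simp) (by simp) (by simp) (by simp) (by simp) (by simp) (by simp)
    omega
  -- the max-degree vertex
  obtain ⟨r, -, hrmax⟩ := Finset.exists_max_image (univ : Finset V) (fun v => R.degree v)
    ⟨Classical.arbitrary V, mem_univ _⟩
  -- degree of r ≥ 3
  have hΔ3 : 3 ≤ R.degree r := by
    by_contra hlt
    push_neg at hlt
    have hall : ∀ v, R.degree v ≤ 2 := fun v => le_trans (hrmax v (mem_univ v)) (by omega)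
    set U := R.neighborFinset a0 ∪ R.neighborFinset y0 ∪ R.neighborFinset b0 with hU
    have hUcard : U.card ≤ 5 := by
      have h1 := Finset.card_union_add_card_inter (R.neighborFinset a0) (R.neighborFinset b0)
      have h2 : 0 < (R.neighborFinset a0 ∩ R.neighborFinset b0).card := by
        apply Finset.card_pos.mpr
        exact ⟨y0, Finset.mem_inter.mpr ⟨(R.mem_neighborFinset a0 y0).mpr hya0.symm,
          (R.mem_neighborFinset b0 y0).mpr hyb0.symm⟩⟩
      have h3 : U.card ≤ (R.neighborFinset a0 ∪ R.neighborFinset b0).card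
          + (R.neighborFinset y0).card := by
        refine le_trans (Finset.card_le_card ?_) (Finset.card_union_le _ _)
        intro u hu
        rw [hU] at hu
        simp only [Finset.mem_union] at hu ⊢
        tauto
      have hda := hall a0
      have hdb := hall b0
      have hdy := hall y0
      simp only [SimpleGraph.degree] at hda hdb hdy
      omega
    have hUa : ∀ {u}, R.Adj a0 u → u ∈ U := by
      intro u h
      rw [hU]; simp only [Finset.mem_union]
      exact Or.inl (Or.inl ((R.mem_neighborFinset a0 u).mpr h))
    have hUy : ∀ {u}, R.Adj y0 u → u ∈ U := by
      intro u h
      rw [hU]; simp only [Finset.mem_union]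
      exact Or.inl (Or.inr ((R.mem_neighborFinset y0 u).mpr h))
    have hUb : ∀ {u}, R.Adj b0 u → u ∈ U := by
      intro u h
      rw [hU]; simp only [Finset.mem_union]
      exact Or.inr ((R.mem_neighborFinset b0 u).mpr h)
    have hsplit : ∀ β : Bool, ((univ.filter (fun v => c v = β)) \ U).card < s := by
      intro β
      apply Stmt6.indep_bound hfree hya0.symm hyb0 (nonadj_of_common hya0 hyb0) hab0
      · intro u hu w hw _ hadj
        rw [Finset.mem_sdiff, mem_filter] at hu hw
        exact hc hadj (hu.1.2.trans hw.1.2.symm)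
      · intro u hu hadj
        exact (Finset.mem_sdiff.mp hu).2 (hUa hadj.symm)
      · intro u hu hadj
        exact (Finset.mem_sdiff.mp hu).2 (hUy hadj.symm)
      · intro u hu hadj
        exact (Finset.mem_sdiff.mp hu).2 (hUb hadj.symm)
      · intro hmem
        exact (Finset.mem_sdiff.mp hmem).2 (hUy hya0)
      · intro hmem
        exact (Finset.mem_sdiff.mp hmem).2 (hUa hya0.symm)
      · intro hmem
        exact (Finset.mem_sdiff.mp hmem).2 (hUy hyb0)
    have hcover : (univ : Finset V) ⊆ U ∪ ((univ.filter (fun v => c v = true)) \ U)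
        ∪ ((univ.filter (fun v => c v = false)) \ U) := by
      intro v _
      by_cases hv : v ∈ U
      · simp [hv]
      · cases hcv : c v
        · simp [hv, hcv]
        · simp [hv, hcv]
    have := Finset.card_le_card hcover
    have hc1 := Finset.card_union_le (U ∪ ((univ.filter (fun v => c v = true)) \ U))
      ((univ.filter (fun v => c v = false)) \ U)
    have hc2 := Finset.card_union_le U ((univ.filter (fun v => c v = true)) \ U)
    have ht := hsplit true
    have hf := hsplit false
    rw [Finset.card_univ] at this
    omega
  -- classes
  set A := univ.filter (fun v => c v = c r) with hA
  set B := univ.filter (fun v => c v = !(c r)) with hB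
  have hABcard : A.card + B.card = n := by
    have h0 := Finset.card_filter_add_card_filter_not (s := (univ : Finset V))
      (p := fun v => c v = c r)
    rw [Finset.card_univ] at h0
    have hBeq : B = univ.filter (fun v => ¬(c v = c r)) := by
      rw [hB]
      apply Finset.filter_congr
      intro v _
      cases hcv : c v <;> cases hcr : c r <;> simp
    rw [hBeq]
    exact h0
  -- K1 : big degrees for degree-2 vertices
  have K1 : ∀ y : V, 2 ≤ R.degree y →
      (univ.filter (fun v => c v = !(c y))).card + 1 ≤ s + R.degree y := by
    intro y hy2
    obtain ⟨x, z, hyx, hyz, hxz⟩ := two_nbrs hy2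
    have hcond1 : ∀ u ∈ (univ.filter (fun v => c v = !(c y))) \ R.neighborFinset y,
        ∀ w ∈ (univ.filter (fun v => c v = !(c y))) \ R.neighborFinset y,
        u ≠ w → ¬R.Adj u w := by
      intro u hu w hw _ hadj
      rw [Finset.mem_sdiff, mem_filter] at hu hw
      exact hc hadj (hu.1.2.trans hw.1.2.symm)
    have hcondx : ∀ u ∈ (univ.filter (fun v => c v = !(c y))) \ R.neighborFinset y,
        ¬R.Adj u x := by
      intro u hu hadj
      rw [Finset.mem_sdiff, mem_filter] at hu
      exact hc hadj (hu.1.2.trans (Stmt6.bool_opp (hc hyx)).symm)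
    have hcondy : ∀ u ∈ (univ.filter (fun v => c v = !(c y))) \ R.neighborFinset y,
        ¬R.Adj u y := by
      intro u hu hadj
      exact (Finset.mem_sdiff.mp hu).2 ((R.mem_neighborFinset y u).mpr hadj.symm)
    have hcondz : ∀ u ∈ (univ.filter (fun v => c v = !(c y))) \ R.neighborFinset y,
        ¬R.Adj u z := by
      intro u hu hadj
      rw [Finset.mem_sdiff, mem_filter] at hu
      exact hc hadj (hu.1.2.trans (Stmt6.bool_opp (hc hyz)).symm)
    have hxout : x ∉ (univ.filter (fun v => c v = !(c y))) \ R.neighborFinset y :=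
      fun hmem => (Finset.mem_sdiff.mp hmem).2 ((R.mem_neighborFinset y x).mpr hyx)
    have hyout : y ∉ (univ.filter (fun v => c v = !(c y))) \ R.neighborFinset y := by
      intro hmem
      rw [Finset.mem_sdiff, mem_filter] at hmem
      have h := hmem.1.2
      simp at h
    have hzout : z ∉ (univ.filter (fun v => c v = !(c y))) \ R.neighborFinset y :=
      fun hmem => (Finset.mem_sdiff.mp hmem).2 ((R.mem_neighborFinset y z).mpr hyz)
    have htool := Stmt6.indep_bound hfree hyx.symm hyz (nonadj_of_common hyx hyz) hxz
      hcond1 hcondx hcondy hcondz hxout hyout hzout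
    have hsub : (univ.filter (fun v => c v = !(c y))) ⊆
        ((univ.filter (fun v => c v = !(c y))) \ R.neighborFinset y) ∪ R.neighborFinset y := by
      intro u hu
      by_cases h : u ∈ R.neighborFinset y
      · exact Finset.mem_union_right _ h
      · exact Finset.mem_union_left _ (Finset.mem_sdiff.mpr ⟨hu, h⟩)
    have h1 := Finset.card_le_card hsub
    have h2 := Finset.card_union_le
      ((univ.filter (fun v => c v = !(c y))) \ R.neighborFinset y) (R.neighborFinset y)
    have h3 : (R.neighborFinset y).card = R.degree y := rfl
    omega
  -- K2 : pairs of neighbours cover the class of the center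
  have K2 : ∀ y x z : V, R.Adj y x → R.Adj y z → x ≠ z →
      (univ.filter (fun v => c v = c y)).card + 2 ≤ s + R.degree x + R.degree z := by
    intro y x z hyx hyz hxz
    have hcond1 : ∀ u ∈ (univ.filter (fun v => c v = c y)) \
        (R.neighborFinset x ∪ R.neighborFinset z),
        ∀ w ∈ (univ.filter (fun v => c v = c y)) \
        (R.neighborFinset x ∪ R.neighborFinset z), u ≠ w → ¬R.Adj u w := by
      intro u hu w hw _ hadj
      rw [Finset.mem_sdiff, mem_filter] at hu hw
      exact hc hadj (hu.1.2.trans hw.1.2.symm)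
    have hcondx : ∀ u ∈ (univ.filter (fun v => c v = c y)) \
        (R.neighborFinset x ∪ R.neighborFinset z), ¬R.Adj u x := by
      intro u hu hadj
      exact (Finset.mem_sdiff.mp hu).2
        (Finset.mem_union_left _ ((R.mem_neighborFinset x u).mpr hadj.symm))
    have hcondy : ∀ u ∈ (univ.filter (fun v => c v = c y)) \
        (R.neighborFinset x ∪ R.neighborFinset z), ¬R.Adj u y := by
      intro u hu hadj
      rw [Finset.mem_sdiff, mem_filter] at hu
      exact hc hadj hu.1.2
    have hcondz : ∀ u ∈ (univ.filter (fun v => c v = c y)) \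
        (R.neighborFinset x ∪ R.neighborFinset z), ¬R.Adj u z := by
      intro u hu hadj
      exact (Finset.mem_sdiff.mp hu).2
        (Finset.mem_union_right _ ((R.mem_neighborFinset z u).mpr hadj.symm))
    have hxout : x ∉ (univ.filter (fun v => c v = c y)) \
        (R.neighborFinset x ∪ R.neighborFinset z) := by
      intro hmem
      rw [Finset.mem_sdiff, mem_filter] at hmem
      exact hc hyx hmem.1.2.symm
    have hyout : y ∉ (univ.filter (fun v => c v = c y)) \
        (R.neighborFinset x ∪ R.neighborFinset z) := by
      intro hmem
      exact (Finset.mem_sdiff.mp hmem).2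
        (Finset.mem_union_left _ ((R.mem_neighborFinset x y).mpr hyx.symm))
    have hzout : z ∉ (univ.filter (fun v => c v = c y)) \
        (R.neighborFinset x ∪ R.neighborFinset z) := by
      intro hmem
      rw [Finset.mem_sdiff, mem_filter] at hmem
      exact hc hyz hmem.1.2.symm
    have htool := Stmt6.indep_bound hfree hyx.symm hyz (nonadj_of_common hyx hyz) hxz
      hcond1 hcondx hcondy hcondz hxout hyout hzout
    have hsub : (univ.filter (fun v => c v = c y)) ⊆
        ((univ.filter (fun v => c v = c y)) \ (R.neighborFinset x ∪ R.neighborFinset z))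
          ∪ (R.neighborFinset x ∪ R.neighborFinset z) := by
      intro u hu
      by_cases h : u ∈ R.neighborFinset x ∪ R.neighborFinset z
      · exact Finset.mem_union_right _ h
      · exact Finset.mem_union_left _ (Finset.mem_sdiff.mpr ⟨hu, h⟩)
    have h1 := Finset.card_le_card hsub
    have h2 := Finset.card_union_le
      ((univ.filter (fun v => c v = c y)) \ (R.neighborFinset x ∪ R.neighborFinset z))
      (R.neighborFinset x ∪ R.neighborFinset z)
    have h3 := Finset.card_union_add_card_inter (R.neighborFinset x) (R.neighborFinset z)
    have h4 : 0 < (R.neighborFinset x ∩ R.neighborFinset z).card := by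
      apply Finset.card_pos.mpr
      exact ⟨y, Finset.mem_inter.mpr ⟨(R.mem_neighborFinset x y).mpr hyx.symm,
        (R.mem_neighborFinset z y).mpr hyz.symm⟩⟩
    have h5 : (R.neighborFinset x).card = R.degree x := rfl
    have h6 : (R.neighborFinset z).card = R.degree z := rfl
    omega
  -- class handshakes
  have hhsA : ∑ v ∈ A, R.degree v + 1 = n := by
    rw [hA, Stmt6.class_handshake hc (c r)]
    exact hedges
  have hhsB : ∑ v ∈ B, R.degree v + 1 = n := by
    rw [hB, Stmt6.class_handshake hc (!(c r))]
    exact hedges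
  -- C1 : every vertex not adjacent to r and different from r is a leaf
  have C1 : ∀ v, v ≠ r → ¬R.Adj v r → R.degree v ≤ 1 := by
    intro v hvr hvnr
    by_contra hcon2
    push_neg at hcon2
    have h2 : 2 ≤ R.degree v := hcon2
    have hnbr : ∃ x, R.Adj v x ∧ 2 ≤ R.degree x := by
      by_contra hno
      push_neg at hno
      have hclosed : ∀ u ∈ {u | u = v ∨ R.Adj v u}, ∀ w, R.Adj u w →
          w ∈ {u | u = v ∨ R.Adj v u} := by
        rintro u (rfl | hu) w hw
        · exact Or.inr hw
        · left
          have hv1 : v ∈ R.neighborFinset u := (R.mem_neighborFinset u v).mpr hu.symm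
          have hw1 : w ∈ R.neighborFinset u := (R.mem_neighborFinset u w).mpr hw
          have hle := hno u hu
          have : (R.neighborFinset u).card ≤ 1 := by
            have : R.degree u ≤ 1 := by omega
            exact this
          exact (Finset.card_le_one.mp this w hw1 v hv1)
      obtain ⟨p⟩ := htree.isConnected.preconnected v r
      rcases Stmt6.closed_reach hclosed p (Or.inl rfl) with h | h
      · exact hvr h.symm
      · exact hvnr h
    obtain ⟨y, hyA, hyr, hy2⟩ : ∃ y, c y = c r ∧ y ≠ r ∧ 2 ≤ R.degree y := by
      by_cases hcv : c v = c r
      · exact ⟨v, hcv, hvr, h2⟩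
      · obtain ⟨x, hvx, hx2⟩ := hnbr
        refine ⟨x, Stmt6.bool_trans (hc hvx) hcv, ?_, hx2⟩
        rintro rfl
        exact hvnr hvx
    obtain ⟨x1, z1, hyx1, hyz1, hx1z1⟩ := two_nbrs hy2
    by_cases hboth : R.Adj r x1 ∧ R.Adj r z1
    · exact Stmt6.no_c4 htree.IsAcyclic hyr hx1z1 hyx1 hboth.1.symm hyz1 hboth.2.symm
    · -- pick two neighbours of r outside {x1, z1}
      have hint : ((R.neighborFinset r) ∩ ({x1, z1} : Finset V)).card ≤ 1 := by
        rcases not_and_or.mp hboth with hnx | hnz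
        · refine le_trans (Finset.card_le_card ?_) (Finset.card_singleton z1).le
          intro u hu
          rw [Finset.mem_inter, Finset.mem_insert, Finset.mem_singleton] at hu
          rcases hu.2 with rfl | rfl
          · exact absurd ((R.mem_neighborFinset r u).mp hu.1) hnx
          · exact Finset.mem_singleton_self _
        · refine le_trans (Finset.card_le_card ?_) (Finset.card_singleton x1).le
          intro u hu
          rw [Finset.mem_inter, Finset.mem_insert, Finset.mem_singleton] at hu
          rcases hu.2 with rfl | rfl
          · exact Finset.mem_singleton_self _
          · exact absurd ((R.mem_neighborFinset r u).mp hu.1) hnz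
      have hsd := Finset.card_sdiff_add_card_inter (R.neighborFinset r) ({x1, z1} : Finset V)
      have h2lt : 1 < ((R.neighborFinset r) \ ({x1, z1} : Finset V)).card := by
        have hdr : (R.neighborFinset r).card = R.degree r := rfl
        omega
      obtain ⟨p, hp, q, hq, hpq⟩ := Finset.one_lt_card.mp h2lt
      rw [Finset.mem_sdiff] at hp hq
      have hrp : R.Adj r p := (R.mem_neighborFinset r p).mp hp.1
      have hrq : R.Adj r q := (R.mem_neighborFinset r q).mp hq.1
      have hpx1 : p ≠ x1 := fun h => hp.2 (by simp [h])
      have hpz1 : p ≠ z1 := fun h => hp.2 (by simp [h])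
      have hqx1 : q ≠ x1 := fun h => hq.2 (by simp [h])
      have hqz1 : q ≠ z1 := fun h => hq.2 (by simp [h])
      -- K1 for y and r
      have hK1y := K1 y hy2
      have hK1r := K1 r (by omega)
      rw [hyA] at hK1y
      rw [← hB] at hK1y hK1r
      -- sums over A
      have hyA' : y ∈ A := by rw [hA]; simp [hyA]
      have hrA : r ∈ A := by rw [hA]; simp
      have hpairsub : ({y, r} : Finset V) ⊆ A := by
        intro u hu
        rcases Finset.mem_insert.mp hu with rfl | hu
        · exact hyA'
        · rw [Finset.mem_singleton] at hu; subst hu; exact hrA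
      have hsplitA := Finset.sum_sdiff (f := fun v => R.degree v) hpairsub
      beta_reduce at hsplitA
      have hyrnotmem : y ∉ ({r} : Finset V) := by simp [hyr]
      have hsum_pair : ∑ v ∈ ({y, r} : Finset V), R.degree v = R.degree y + R.degree r := by
        rw [Finset.sum_insert hyrnotmem, Finset.sum_singleton]
      have hlowA : (A \ ({y, r} : Finset V)).card ≤
          ∑ v ∈ A \ ({y, r} : Finset V), R.degree v := by
        refine le_trans ?_ (Finset.card_nsmul_le_sum _ _ 1 (fun x _ => hd1 x))
        simp
      have hcardpair : ({y, r} : Finset V).card = 2 := by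
        rw [Finset.card_insert_of_notMem hyrnotmem, Finset.card_singleton]
      have hcardA : (A \ ({y, r} : Finset V)).card = A.card - 2 := by
        rw [Finset.card_sdiff_of_subset hpairsub, hcardpair]
      have hA2 : 2 ≤ A.card := by
        have := Finset.card_le_card hpairsub
        omega
      -- K2 applications
      have hK2y := K2 y x1 z1 hyx1 hyz1 hx1z1
      have hK2r := K2 r p q hrp hrq hpq
      rw [hyA] at hK2y
      rw [← hA] at hK2y hK2r
      -- B-side sum over the four vertices
      have hx1B : x1 ∈ B := by
        rw [hB]
        have : c x1 = !(c r) := Stmt6.bool_opp (by rw [← hyA]; exact hc hyx1)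
        simp [this]
      have hz1B : z1 ∈ B := by
        rw [hB]
        have : c z1 = !(c r) := Stmt6.bool_opp (by rw [← hyA]; exact hc hyz1)
        simp [this]
      have hpB : p ∈ B := by
        rw [hB]
        have : c p = !(c r) := Stmt6.bool_opp (hc hrp)
        simp [this]
      have hqB : q ∈ B := by
        rw [hB]
        have : c q = !(c r) := Stmt6.bool_opp (hc hrq)
        simp [this]
      have hFsub : ({x1, z1, p, q} : Finset V) ⊆ B := by
        intro u hu
        rcases Finset.mem_insert.mp hu with rfl | hu
        · exact hx1B
        rcases Finset.mem_insert.mp hu with rfl | hu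
        · exact hz1B
        rcases Finset.mem_insert.mp hu with rfl | hu
        · exact hpB
        rw [Finset.mem_singleton] at hu; subst hu; exact hqB
      have hm1 : x1 ∉ ({z1, p, q} : Finset V) := by
        simp only [Finset.mem_insert, Finset.mem_singleton]
        push_neg
        exact ⟨hx1z1, fun h => hpx1 h.symm, fun h => hqx1 h.symm⟩
      have hm2 : z1 ∉ ({p, q} : Finset V) := by
        simp only [Finset.mem_insert, Finset.mem_singleton]
        push_neg
        exact ⟨fun h => hpz1 h.symm, fun h => hqz1 h.symm⟩
      have hm3 : p ∉ ({q} : Finset V) := by simp [hpq]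
      have hsum_F : ∑ v ∈ ({x1, z1, p, q} : Finset V), R.degree v
          = R.degree x1 + R.degree z1 + R.degree p + R.degree q := by
        rw [Finset.sum_insert hm1, Finset.sum_insert hm2, Finset.sum_insert hm3,
          Finset.sum_singleton]
        omega
      have hcard_F : ({x1, z1, p, q} : Finset V).card = 4 := by
        rw [Finset.card_insert_of_notMem hm1, Finset.card_insert_of_notMem hm2,
          Finset.card_insert_of_notMem hm3, Finset.card_singleton]
      have hsplitB := Finset.sum_sdiff (f := fun v => R.degree v) hFsub
      beta_reduce at hsplitB
      have hlowB : (B \ ({x1, z1, p, q} : Finset V)).card ≤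
          ∑ v ∈ B \ ({x1, z1, p, q} : Finset V), R.degree v := by
        refine le_trans ?_ (Finset.card_nsmul_le_sum _ _ 1 (fun x _ => hd1 x))
        simp
      have hcardBF : (B \ ({x1, z1, p, q} : Finset V)).card = B.card - 4 := by
        rw [Finset.card_sdiff_of_subset hFsub, hcard_F]
      have hB4 : 4 ≤ B.card := by
        have := Finset.card_le_card hFsub
        omega
      omega
  -- every vertex of degree ≥ 2 is r or adjacent to r
  have hadj_or : ∀ v, 2 ≤ R.degree v → v = r ∨ R.Adj v r := by
    intro v hv
    by_cases h1 : v = r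
    · exact Or.inl h1
    · by_cases h2 : R.Adj v r
      · exact Or.inr h2
      · have := C1 v h1 h2
        omega
  -- G2 : vertices at distance ≥ 2 from r
  set G2 := (univ : Finset V) \ insert r (R.neighborFinset r) with hG2
  have hg_card : G2.card + (R.degree r + 1) = n := by
    have hsub := Finset.card_sdiff_of_subset (Finset.subset_univ (insert r (R.neighborFinset r)))
    have hins : (insert r (R.neighborFinset r)).card = R.degree r + 1 := by
      rw [Finset.card_insert_of_notMem (R.notMem_neighborFinset_self r)]
      rfl
    have hle := Finset.card_le_card (Finset.subset_univ (insert r (R.neighborFinset r)))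
    rw [hins, Finset.card_univ] at hsub hle
    rw [hG2, hsub]
    omega
  have hG2mem : ∀ w ∈ G2, w ≠ r ∧ ¬R.Adj r w := by
    intro w hw
    rw [hG2, Finset.mem_sdiff, Finset.mem_insert] at hw
    push_neg at hw
    exact ⟨hw.2.1, fun h => hw.2.2 ((R.mem_neighborFinset r w).mpr h)⟩
  have hG2deg : ∀ w ∈ G2, R.degree w = 1 := by
    intro w hw
    obtain ⟨h1, h2⟩ := hG2mem w hw
    have h3 := C1 w h1 (fun h => h2 h.symm)
    have h4 := hd1 w
    omega
  -- two leaves are never adjacent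
  have hleaf : ∀ u w, R.degree u = 1 → R.degree w = 1 → ¬R.Adj u w := by
    intro u w hu hw hadj
    have hNu : R.neighborFinset u = {w} := by
      apply Finset.eq_singleton_iff_unique_mem.mpr
      refine ⟨(R.mem_neighborFinset u w).mpr hadj, ?_⟩
      intro b hb
      exact Finset.card_le_one.mp (le_of_eq hu) b hb w ((R.mem_neighborFinset u w).mpr hadj)
    have hNw : R.neighborFinset w = {u} := by
      apply Finset.eq_singleton_iff_unique_mem.mpr
      refine ⟨(R.mem_neighborFinset w u).mpr hadj.symm, ?_⟩
      intro b hb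
      exact Finset.card_le_one.mp (le_of_eq hw) b hb u ((R.mem_neighborFinset w u).mpr hadj.symm)
    have hclosed : ∀ a ∈ ({u, w} : Set V), ∀ b, R.Adj a b → b ∈ ({u, w} : Set V) := by
      intro a ha b hb
      simp only [Set.mem_insert_iff, Set.mem_singleton_iff] at ha ⊢
      rcases ha with rfl | rfl
      · right
        have hmem : b ∈ R.neighborFinset a := (R.mem_neighborFinset a b).mpr hb
        rw [hNu] at hmem
        exact Finset.mem_singleton.mp hmem
      · left
        have hmem : b ∈ R.neighborFinset a := (R.mem_neighborFinset a b).mpr hb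
        rw [hNw] at hmem
        exact Finset.mem_singleton.mp hmem
    obtain ⟨p⟩ := htree.isConnected.preconnected u r
    have hrmem := Stmt6.closed_reach hclosed p (by left; rfl)
    simp only [Set.mem_insert_iff, Set.mem_singleton_iff] at hrmem
    rcases hrmem with h | h
    · rw [h] at hΔ3; omega
    · rw [h] at hΔ3; omega
  -- uniqueness of the parent of a leaf
  have hpar_unique : ∀ u v v', R.degree u = 1 → R.Adj v u → R.Adj v' u → v = v' := by
    intro u v v' hu hv hv'
    have h1 : v ∈ R.neighborFinset u := (R.mem_neighborFinset u v).mpr hv.symm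
    have h2 : v' ∈ R.neighborFinset u := (R.mem_neighborFinset u v').mpr hv'.symm
    exact Finset.card_le_one.mp (le_of_eq hu) v h1 v' h2
  -- children of neighbours of r lie in G2
  have hchild_sub : ∀ v, R.Adj r v → (R.neighborFinset v \ {r}) ⊆ G2 := by
    intro v hv u hu
    rw [Finset.mem_sdiff, Finset.mem_singleton] at hu
    have hadjvu : R.Adj v u := (R.mem_neighborFinset v u).mp hu.1
    rw [hG2, Finset.mem_sdiff, Finset.mem_insert]
    refine ⟨Finset.mem_univ u, ?_⟩
    push_neg
    refine ⟨hu.2, ?_⟩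
    intro hmem
    have hru : R.Adj r u := (R.mem_neighborFinset r u).mp hmem
    have hcv : c v = !(c r) := Stmt6.bool_opp (hc hv)
    have hcu : c u = !(c r) := Stmt6.bool_opp (hc hru)
    exact hc hadjvu (hcv.trans hcu.symm)
  have hchild_card : ∀ v, R.Adj r v → (R.neighborFinset v \ {r}).card + 1 = R.degree v := by
    intro v hv
    have hrsub : ({r} : Finset V) ⊆ R.neighborFinset v := by
      intro a ha
      rw [Finset.mem_singleton] at ha
      rw [ha]
      exact (R.mem_neighborFinset v r).mpr hv.symm
    rw [Finset.card_sdiff_of_subset hrsub, Finset.card_singleton]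
    have h0 : (R.neighborFinset v).card = R.degree v := rfl
    have h1 := hd1 v
    omega
  -- leaf-children and big children of r
  set Lr := (R.neighborFinset r).filter (fun v => R.degree v = 1) with hLr
  set Qr := (R.neighborFinset r).filter (fun v => 2 ≤ R.degree v) with hQr
  have hLrmem : ∀ {u}, u ∈ Lr → R.Adj r u ∧ R.degree u = 1 := by
    intro u hu
    rw [hLr, mem_filter] at hu
    exact ⟨(R.mem_neighborFinset r u).mp hu.1, hu.2⟩
  have hQrmem : ∀ {u}, u ∈ Qr → R.Adj r u ∧ 2 ≤ R.degree u := by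
    intro u hu
    rw [hQr, mem_filter] at hu
    exact ⟨(R.mem_neighborFinset r u).mp hu.1, hu.2⟩
  have hQrmem' : ∀ {u}, R.Adj r u → 2 ≤ R.degree u → u ∈ Qr := by
    intro u hu1 hu2
    rw [hQr, mem_filter]
    exact ⟨(R.mem_neighborFinset r u).mpr hu1, hu2⟩
  have hLQ : Lr.card + Qr.card = R.degree r := by
    have h0 := Finset.card_filter_add_card_filter_not (s := R.neighborFinset r)
      (p := fun v => R.degree v = 1)
    have hQeq : Qr = (R.neighborFinset r).filter (fun v => ¬(R.degree v = 1)) := by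
      rw [hQr]
      apply Finset.filter_congr
      intro v _
      have := hd1 v
      constructor <;> intro <;> omega
    rw [hLr, hQeq, h0]
    rfl
  have hq_le_g : Qr.card ≤ G2.card := by
    have hmap : ∀ v : V, ∃ u, v ∈ Qr → u ∈ (R.neighborFinset v \ {r}) := by
      intro v
      by_cases hv : v ∈ Qr
      · have hrv : R.Adj r v := (hQrmem hv).1
        have h0 := hchild_card v hrv
        have hd2 : 2 ≤ R.degree v := (hQrmem hv).2
        have hnon : (R.neighborFinset v \ {r}).Nonempty := Finset.card_pos.mp (by omega)
        exact ⟨hnon.choose, fun _ => hnon.choose_spec⟩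
      · exact ⟨r, fun h => absurd h hv⟩
    choose f hf using hmap
    apply Finset.card_le_card_of_injOn f
    · intro v hv
      have hrv : R.Adj r v := (hQrmem hv).1
      exact hchild_sub v hrv (hf v hv)
    · intro v1 h1 v2 h2 heq
      have hrv1 : R.Adj r v1 := (hQrmem (Finset.mem_coe.mp h1)).1
      have hrv2 : R.Adj r v2 := (hQrmem (Finset.mem_coe.mp h2)).1
      have hu1 := hf v1 (Finset.mem_coe.mp h1)
      have hu2 := hf v2 (Finset.mem_coe.mp h2)
      rw [heq] at hu1
      have hG2u : f v2 ∈ G2 := hchild_sub v1 hrv1 hu1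
      have hdeg1 : R.degree (f v2) = 1 := hG2deg _ hG2u
      rw [Finset.mem_sdiff] at hu1 hu2
      exact hpar_unique (f v2) v1 v2 hdeg1 ((R.mem_neighborFinset v1 _).mp hu1.1)
        ((R.mem_neighborFinset v2 _).mp hu2.1)
  -- decomposition of G2 along children of a neighbour of r
  have hG2split : ∀ v, R.Adj r v →
      (G2 \ R.neighborFinset v).card + (R.neighborFinset v \ {r}).card = G2.card := by
    intro v hv
    have h1 := Finset.card_sdiff_add_card_inter G2 (R.neighborFinset v)
    have h2 : G2 ∩ R.neighborFinset v = R.neighborFinset v \ {r} := by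
      ext u
      simp only [Finset.mem_inter, Finset.mem_sdiff, Finset.mem_singleton]
      constructor
      · rintro ⟨hu1, hu2⟩
        exact ⟨hu2, (hG2mem u hu1).1⟩
      · rintro ⟨hu1, hu2⟩
        exact ⟨hchild_sub v hv (Finset.mem_sdiff.mpr ⟨hu1,
          Finset.notMem_singleton.mpr hu2⟩), hu1⟩
    rw [h2] at h1
    exact h1
  -- T2
  have T2 : ∀ v, R.Adj r v → 2 ≤ R.degree v → (G2 \ R.neighborFinset v).card < s := by
    intro v hrv hv2
    have hcc := hchild_card v hrv
    have hnon : (R.neighborFinset v \ {r}).Nonempty := Finset.card_pos.mp (by omega)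
    obtain ⟨x, hx⟩ := hnon
    have hxG2 : x ∈ G2 := hchild_sub v hrv hx
    have hxdeg : R.degree x = 1 := hG2deg x hxG2
    have hvx : R.Adj v x := (R.mem_neighborFinset v x).mp (Finset.mem_sdiff.mp hx).1
    have hxr : ¬R.Adj x r := fun h => (hG2mem x hxG2).2 h.symm
    have hxner : x ≠ r := (hG2mem x hxG2).1
    apply Stmt6.indep_bound hfree (x := x) (y := v) (z := r) hvx.symm hrv.symm hxr hxner
    · intro u hu w hw _ hadj
      rw [Finset.mem_sdiff] at hu hw
      exact hleaf u w (hG2deg u hu.1) (hG2deg w hw.1) hadj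
    · intro u hu hadj
      rw [Finset.mem_sdiff] at hu
      exact hleaf u x (hG2deg u hu.1) hxdeg hadj
    · intro u hu hadj
      exact (Finset.mem_sdiff.mp hu).2 ((R.mem_neighborFinset v u).mpr hadj.symm)
    · intro u hu hadj
      exact (hG2mem u (Finset.mem_sdiff.mp hu).1).2 hadj.symm
    · exact fun hmem => (Finset.mem_sdiff.mp hmem).2 (Finset.mem_sdiff.mp hx).1
    · exact fun hmem => (hG2mem v (Finset.mem_sdiff.mp hmem).1).2 hrv
    · exact fun hmem => (hG2mem r (Finset.mem_sdiff.mp hmem).1).1 rfl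
  -- T3
  have T3 : ∀ v, R.Adj r v → 3 ≤ R.degree v →
      ((G2 \ R.neighborFinset v) ∪ Lr).card < s := by
    intro v hrv hv3
    have hcc := hchild_card v hrv
    have h2chld : 1 < (R.neighborFinset v \ {r}).card := by omega
    obtain ⟨x, hx, z, hz, hxz⟩ := Finset.one_lt_card.mp h2chld
    have hxG2 : x ∈ G2 := hchild_sub v hrv hx
    have hzG2 : z ∈ G2 := hchild_sub v hrv hz
    have hdx : R.degree x = 1 := hG2deg x hxG2
    have hdz : R.degree z = 1 := hG2deg z hzG2
    have hvx : R.Adj v x := (R.mem_neighborFinset v x).mp (Finset.mem_sdiff.mp hx).1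
    have hvz : R.Adj v z := (R.mem_neighborFinset v z).mp (Finset.mem_sdiff.mp hz).1
    have hSdeg : ∀ u ∈ (G2 \ R.neighborFinset v) ∪ Lr, R.degree u = 1 := by
      intro u hu
      rcases Finset.mem_union.mp hu with hu | hu
      · exact hG2deg u (Finset.mem_sdiff.mp hu).1
      · exact (hLrmem hu).2
    have hSnv : ∀ u ∈ (G2 \ R.neighborFinset v) ∪ Lr, ¬R.Adj u v := by
      intro u hu hadj
      rcases Finset.mem_union.mp hu with hu | hu
      · exact (Finset.mem_sdiff.mp hu).2 ((R.mem_neighborFinset v u).mpr hadj.symm)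
      · have hru : R.Adj r u := (hLrmem hu).1
        exact hc hadj ((Stmt6.bool_opp (hc hru)).trans (Stmt6.bool_opp (hc hrv)).symm)
    apply Stmt6.indep_bound hfree (x := x) (y := v) (z := z) hvx.symm hvz
      (hleaf x z hdx hdz) hxz
    · intro u hu w hw _ hadj
      exact hleaf u w (hSdeg u hu) (hSdeg w hw) hadj
    · intro u hu hadj
      exact hleaf u x (hSdeg u hu) hdx hadj
    · exact hSnv
    · intro u hu hadj
      exact hleaf u z (hSdeg u hu) hdz hadj
    · intro hmem
      rcases Finset.mem_union.mp hmem with hm | hm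
      · exact (Finset.mem_sdiff.mp hm).2 (Finset.mem_sdiff.mp hx).1
      · exact (hG2mem x hxG2).2 (hLrmem hm).1
    · intro hmem
      rcases Finset.mem_union.mp hmem with hm | hm
      · exact (hG2mem v (Finset.mem_sdiff.mp hm).1).2 hrv
      · have := (hLrmem hm).2
        omega
    · intro hmem
      rcases Finset.mem_union.mp hmem with hm | hm
      · exact (Finset.mem_sdiff.mp hm).2 (Finset.mem_sdiff.mp hz).1
      · exact (hG2mem z hzG2).2 (hLrmem hm).1
  have hunion_card : ∀ v, ((G2 \ R.neighborFinset v) ∪ Lr).card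
      = (G2 \ R.neighborFinset v).card + Lr.card := by
    intro v
    apply Finset.card_union_of_disjoint
    rw [Finset.disjoint_left]
    intro u hu hu2
    exact (hG2mem u (Finset.mem_sdiff.mp hu).1).2 (hLrmem hu2).1
  by_cases hLr2 : 2 ≤ Lr.card
  · -- main structural case
    obtain ⟨p, hpmem, p', hp'mem, hpp'⟩ := Finset.one_lt_card.mp hLr2
    have hpN : R.Adj r p := (hLrmem hpmem).1
    have hpd : R.degree p = 1 := (hLrmem hpmem).2
    have hp'N : R.Adj r p' := (hLrmem hp'mem).1
    have hp'd : R.degree p' = 1 := (hLrmem hp'mem).2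
    have hT1 : G2.card < s := by
      apply Stmt6.indep_bound hfree (x := p) (y := r) (z := p') hpN.symm hp'N
        (hleaf p p' hpd hp'd) hpp'
      · intro u hu w hw _ hadj
        exact hleaf u w (hG2deg u hu) (hG2deg w hw) hadj
      · intro u hu hadj
        exact hleaf u p (hG2deg u hu) hpd hadj
      · intro u hu hadj
        exact (hG2mem u hu).2 hadj.symm
      · intro u hu hadj
        exact hleaf u p' (hG2deg u hu) hp'd hadj
      · exact fun hmem => (hG2mem p hmem).2 hpN
      · exact fun hmem => (hG2mem r hmem).1 rfl
      · exact fun hmem => (hG2mem p' hmem).2 hp'N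
    have hii : ∀ v, 2 < R.degree v → v = r := by
      intro v hv
      by_contra hne
      rcases hadj_or v (by omega) with h | h
      · exact hne h
      · have hrv : R.Adj r v := h.symm
        have hT3 := T3 v hrv (by omega)
        rw [hunion_card v] at hT3
        have hsp := hG2split v hrv
        have hcc := hchild_card v hrv
        omega
    have hD2sub : (univ.filter (fun v => R.degree v = 2)) ⊆ Qr := by
      intro v hv
      rw [mem_filter] at hv
      have hv2 : R.degree v = 2 := hv.2
      have hvner : v ≠ r := by
        intro h
        rw [h] at hv2
        omega
      rcases hadj_or v (by omega) with h | h
      · exact absurd h hvner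
      · exact hQrmem' h.symm (by omega)
    have hsetD : {v : V | (R.neighborSet v).ncard = 2}
        = ↑(univ.filter (fun v => R.degree v = 2)) := by
      ext v
      simp only [Set.mem_setOf_eq, Finset.coe_filter, mem_univ, true_and]
      rw [hdeg v]
    refine ⟨r, ?_, ?_, ?_, ?_, ?_⟩
    · rw [hdeg r]
      omega
    · intro v hv
      rw [hdeg v] at hv
      exact hii v hv
    · intro v hv
      rw [hdeg v] at hv
      have hvner : v ≠ r := by
        intro h
        rw [h] at hv
        omega
      rcases hadj_or v (by omega) with h | h
      · exact absurd h hvner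
      · exact h
    · rw [hsetD, Set.ncard_coe_finset]
      have := Finset.card_le_card hD2sub
      omega
    · rw [hdeg r]
      omega
  · -- at most one leaf-child : contradiction
    push_neg at hLr2
    have hQr2 : 2 ≤ Qr.card := by omega
    obtain ⟨v1, h1, v2, h2, hv12⟩ := Finset.one_lt_card.mp hQr2
    have hrv1 : R.Adj r v1 :=
      (hQrmem h1).1
    have hd21 : 2 ≤ R.degree v1 := (hQrmem h1).2
    have hrv2 : R.Adj r v2 :=
      (hQrmem h2).1
    have hd22 : 2 ≤ R.degree v2 := (hQrmem h2).2
    have hT2a := T2 v1 hrv1 hd21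
    have hT2b := T2 v2 hrv2 hd22
    have hs1a := hG2split v1 hrv1
    have hs1b := hG2split v2 hrv2
    have hc1 := hchild_card v1 hrv1
    have hc2 := hchild_card v2 hrv2
    have hdisj : Disjoint (R.neighborFinset v1 \ {r}) (R.neighborFinset v2 \ {r}) := by
      rw [Finset.disjoint_left]
      intro u hu1 hu2
      have hG2u : u ∈ G2 := hchild_sub v1 hrv1 hu1
      exact hv12 (hpar_unique u v1 v2 (hG2deg u hG2u)
        ((R.mem_neighborFinset v1 u).mp (Finset.mem_sdiff.mp hu1).1)
        ((R.mem_neighborFinset v2 u).mp (Finset.mem_sdiff.mp hu2).1))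
    have hsum_ch : (R.neighborFinset v1 \ {r}).card + (R.neighborFinset v2 \ {r}).card
        ≤ G2.card := by
      rw [← Finset.card_union_of_disjoint hdisj]
      apply Finset.card_le_card
      intro u hu
      rcases Finset.mem_union.mp hu with hu | hu
      · exact hchild_sub v1 hrv1 hu
      · exact hchild_sub v2 hrv2 hu
    exact absurd rfl (by omega : ¬(0 = 0))
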